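/- The merge operator ⊗ is idempotent: for every decision space X on a type α with values in a real vector space E, and any specialization function M : Set α → ℝ that is strictly positive on nonempty sets, X ⊗ X = X. -/

import Mathlib

open Set

/-- The support of a decision space: the union of the first components of its pairs. -/
def DSsupp {α E : Type*} (X : Set (Set α × E)) : Set α := ⋃ p ∈ X, p.1

/-- A decision space on `α` with values in `E`: a finite set of pairs `(s, v)`
whose first components are nonempty and pairwise disjoint. -/
def IsDecisionSpace {α E : Type*} (X : Set (Set α × E)) : Prop :=
  X.Finite ∧ (∀ p ∈ X, p.1.Nonempty) ∧
    ∀ p ∈ X, ∀ q ∈ X, p ≠ q → Disjoint p.1 q.1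

/-- The merge `X ⊗ Y` of two decision spaces with respect to the specialization `M`. -/
def DSmerge {α E : Type*} [AddCommMonoid E] [SMul ℝ E] (M : Set α → ℝ)
    (X Y : Set (Set α × E)) : Set (Set α × E) :=
  {z | (∃ p ∈ X, ∃ q ∈ Y, (p.1 ∩ q.1).Nonempty ∧
          z = (p.1 ∩ q.1,
               (M p.1 / (M p.1 + M q.1)) • p.2 + (M q.1 / (M p.1 + M q.1)) • q.2)) ∨
       (∃ p ∈ X, (p.1 \ DSsupp Y).Nonempty ∧ z = (p.1 \ DSsupp Y, p.2)) ∨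
       (∃ q ∈ Y, (q.1 \ DSsupp X).Nonempty ∧ z = (q.1 \ DSsupp X, q.2))}

/-- The restriction `X ⊙ Y` of a decision space `X` by a decision space `Y`. -/
def DSrestrict {α E : Type*} (X Y : Set (Set α × E)) : Set (Set α × E) :=
  {z | ∃ p ∈ X, (p.1 ∩ DSsupp Y).Nonempty ∧ z = (p.1 ∩ DSsupp Y, p.2)}

/-- The merge operator is idempotent for specializations that are strictly positive on
nonempty sets. -/
theorem DSmerge_idem {α E : Type*} [AddCommGroup E] [Module ℝ E]
    (M : Set α → ℝ) (hM : ∀ s : Set α, s.Nonempty → 0 < M s)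
    (X : Set (Set α × E)) (hX : IsDecisionSpace X) :
    DSmerge M X X = X := by
  obtain ⟨hfin, hne, hdisj⟩ := hX
  ext z
  constructor
  · rintro (⟨p, hp, q, hq, hpq, rfl⟩ | ⟨p, hp, hpd, rfl⟩ | ⟨q, hq, hqd, rfl⟩)
    · have hpeq : p = q := by
        by_contra h
        exact hpq.not_subset_empty ((hdisj p hp q hq h).le_bot)
      subst hpeq
      have hMp : M p.1 ≠ 0 := (hM p.1 (hne p hp)).ne'
      have : (M p.1 / (M p.1 + M p.1)) • p.2 + (M p.1 / (M p.1 + M p.1)) • p.2 = p.2 := by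
        rw [← add_smul]
        rw [← add_div, div_self (by linarith [hM p.1 (hne p hp)])]
        exact one_smul ℝ p.2
      simpa [Set.inter_self, this] using hp
    · exfalso
      have : p.1 ⊆ DSsupp X := fun x hx => Set.mem_biUnion hp hx
      obtain ⟨x, hx1, hx2⟩ := hpd
      exact hx2 (this hx1)
    · exfalso
      have : q.1 ⊆ DSsupp X := fun x hx => Set.mem_biUnion hq hx
      obtain ⟨x, hx1, hx2⟩ := hqd
      exact hx2 (this hx1)
  · intro hz
    left
    refine ⟨z, hz, z, hz, by simpa using hne z hz, ?_⟩
    have hMz : M z.1 ≠ 0 := (hM z.1 (hne z hz)).ne'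
    have : (M z.1 / (M z.1 + M z.1)) • z.2 + (M z.1 / (M z.1 + M z.1)) • z.2 = z.2 := by
      rw [← add_smul, ← add_div, div_self (by linarith [hM z.1 (hne z hz)])]
      exact one_smul ℝ z.2
    simp [Set.inter_self, this]
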